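/- Let (A, α) be a reversible C*-dynamical system, i.e. ker α is a complemented ideal of A and the range α(A) is a hereditary C*-subalgebra of A. Then for every n ∈ ℕ the C*-dynamical system (A, αⁿ) is also reversible: ker(αⁿ) is a complemented ideal of A and αⁿ(A) is a hereditary C*-subalgebra of A. -/

import Mathlib

open scoped CStarAlgebra

namespace Stmt4Aux

variable {A : Type*} [NonUnitalCStarAlgebra A]

/-- Bundled iterate of a non-unital star algebra endomorphism. -/
noncomputable def npow (α : A →⋆ₙₐ[ℂ] A) : ℕ → (A →⋆ₙₐ[ℂ] A)
  | 0 => NonUnitalStarAlgHom.id ℂ A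
  | n + 1 => (npow α n).comp α

lemma npow_coe (α : A →⋆ₙₐ[ℂ] A) (n : ℕ) : ⇑(npow α n) = (⇑α)^[n] := by
  induction n with
  | zero => rfl
  | succ n ih =>
    show ⇑(npow α n) ∘ ⇑α = _
    rw [ih, Function.iterate_succ]

lemma iter_mul (α : A →⋆ₙₐ[ℂ] A) (n : ℕ) (x y : A) :
    (⇑α)^[n] (x * y) = (⇑α)^[n] x * (⇑α)^[n] y := by
  rw [← npow_coe]; exact map_mul _ _ _

lemma iter_star (α : A →⋆ₙₐ[ℂ] A) (n : ℕ) (x : A) :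
    (⇑α)^[n] (star x) = star ((⇑α)^[n] x) := by
  rw [← npow_coe]; exact map_star _ _

/-- `IsAnn α n c` means `c` left-annihilates `ker (α^n)`. -/
def IsAnn (α : A →⋆ₙₐ[ℂ] A) (n : ℕ) (c : A) : Prop :=
  ∀ b : A, (⇑α)^[n] b = 0 → c * b = 0

lemma eq_zero_of_mul_star_self (x : A) (h : x * star x = 0) : x = 0 := by
  have : ‖x‖ * ‖x‖ = 0 := by rw [← CStarRing.norm_self_mul_star, h, norm_zero]
  have := mul_self_eq_zero.mp this
  simpa using norm_eq_zero.mp this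

/-- elements of the kernel right-annihilate elements of the annihilator. -/
lemma ker_mul_ann (α : A →⋆ₙₐ[ℂ] A) (n : ℕ) {b c : A} (hc : IsAnn α n c)
    (hb : (⇑α)^[n] b = 0) : b * c = 0 := by
  set x := b * c with hx
  have hxk : (⇑α)^[n] x = 0 := by rw [hx, iter_mul, hb, zero_mul]
  have hxa : IsAnn α n x := fun b' hb' => by
    rw [hx, mul_assoc, hc b' hb', mul_zero]
  have hstar : (⇑α)^[n] (star x) = 0 := by rw [iter_star, hxk, star_zero]
  exact eq_zero_of_mul_star_self x (hxa _ hstar)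

lemma isAnn_star (α : A →⋆ₙₐ[ℂ] A) (n : ℕ) {c : A} (hc : IsAnn α n c) :
    IsAnn α n (star c) := by
  intro b hb
  have hsb : (⇑α)^[n] (star b) = 0 := by rw [iter_star, hb, star_zero]
  have := ker_mul_ann α n hc hsb
  calc star c * b = star (star b * c) := by simp [star_mul]
    _ = 0 := by rw [this, star_zero]

/-- injectivity of `α^[n]` on the annihilator. -/
lemma ann_inj (α : A →⋆ₙₐ[ℂ] A) (n : ℕ) {c : A} (hc : IsAnn α n c)
    (h : (⇑α)^[n] c = 0) : c = 0 := by
  have hsc : (⇑α)^[n] (star c) = 0 := by rw [iter_star, h, star_zero]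
  exact eq_zero_of_mul_star_self c (hc _ hsc)

/-- The annihilator of `ker (α^n)` as a non-unital star subalgebra. -/
def Bsub (α : A →⋆ₙₐ[ℂ] A) (n : ℕ) : NonUnitalStarSubalgebra ℂ A where
  carrier := {c | IsAnn α n c}
  add_mem' := fun hx hy b hb => by rw [add_mul, hx b hb, hy b hb, add_zero]
  zero_mem' := fun b _ => zero_mul b
  mul_mem' := fun hx hy b hb => by rw [mul_assoc, hy b hb, mul_zero]
  smul_mem' := fun z x hx b hb => by rw [smul_mul_assoc, hx b hb, smul_zero]
  star_mem' := fun hx => isAnn_star α n hx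

lemma mem_Bsub {α : A →⋆ₙₐ[ℂ] A} {n : ℕ} {c : A} : c ∈ Bsub α n ↔ IsAnn α n c :=
  Iff.rfl

lemma isClosed_Bsub (α : A →⋆ₙₐ[ℂ] A) (n : ℕ) : IsClosed ((Bsub α n : Set A)) := by
  have : (Bsub α n : Set A) = ⋂ (b : A) (_ : (⇑α)^[n] b = 0), {c : A | c * b = 0} := by
    ext c
    simp only [Set.mem_iInter, Set.mem_setOf_eq]
    rfl
  rw [this]
  exact isClosed_iInter fun b => isClosed_iInter fun _ =>
    isClosed_eq (continuous_id.mul continuous_const) continuous_const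

/-- `α^[n]` is isometric on the annihilator of its kernel. -/
lemma norm_iter_of_ann (α : A →⋆ₙₐ[ℂ] A) (n : ℕ) {c : A} (hc : IsAnn α n c) :
    ‖(⇑α)^[n] c‖ = ‖c‖ := by
  haveI : IsClosed ((Bsub α n : Set A)) := isClosed_Bsub α n
  let ψ : (Bsub α n) →⋆ₙₐ[ℂ] A :=
    (npow α n).comp (NonUnitalStarSubalgebraClass.subtype (Bsub α n))
  have hψ : ∀ x : Bsub α n, ψ x = (⇑α)^[n] (x : A) := fun x => by
    show npow α n (x : A) = _
    rw [npow_coe]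
  have hinj : Function.Injective ψ := by
    rw [injective_iff_map_eq_zero]
    intro x hx
    rw [hψ] at hx
    exact Subtype.ext (ann_inj α n x.2 hx)
  have := NonUnitalStarAlgHom.norm_map ψ hinj ⟨c, hc⟩
  rw [hψ] at this
  exact this


section Core

open Unitization

set_option maxHeartbeats 1000000 in
/-- Key analytic lemma: inside any non-unital star subalgebra `S`, every element `c ∈ S`
is approximately of the form `c * z * c` with `z ∈ S`. -/
lemma core (S : NonUnitalStarSubalgebra ℂ A) {c : A} (hc : c ∈ S) {ε : ℝ} (hε : 0 < ε) :
    ∃ z ∈ S, ‖c - c * z * c‖ < ε := by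
  classical
  set b : A := star c * c with hb
  have hbS : b ∈ S := mul_mem (star_mem hc) hc
  set M : ℝ := ‖b‖ + 1 with hM
  have hM0 : (0:ℝ) < M := by positivity
  set s : ℝ := M⁻¹ with hs
  have hs0 : (0:ℝ) < s := by positivity
  -- the unitization
  set bU : A⁺¹ := (b : A⁺¹) with hbU
  have hbU_eq : star ((c : A⁺¹)) * ((c : A⁺¹)) = bU := by
    rw [hbU, hb, inr_mul ℂ, inr_star]
  have hbU_sa : IsSelfAdjoint bU := by
    rw [← hbU_eq]; exact IsSelfAdjoint.star_mul_self ((c : A⁺¹))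
  set e : A⁺¹ := 1 - s • bU with he
  -- existence of good approximants at every order
  have key : ∀ m : ℕ, ∃ z ∈ S, ((z * c : A) : A⁺¹) = 1 - e ^ m := by
    intro m
    induction m with
    | zero => exact ⟨0, zero_mem S, by simp⟩
    | succ m ih =>
      obtain ⟨z, hzS, hz⟩ := ih
      refine ⟨z + s • star c - s • (b * z), ?_, ?_⟩
      · exact sub_mem (add_mem hzS (by
          simpa [Complex.coe_smul] using SMulMemClass.smul_mem ((s:ℂ)) (star_mem hc)))
          (by simpa [Complex.coe_smul] using SMulMemClass.smul_mem ((s:ℂ)) (mul_mem hbS hzS))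
      · have expand : (z + s • star c - s • (b * z)) * c
            = z * c + s • b - s • (b * (z * c)) := by
          rw [sub_mul, add_mul, smul_mul_assoc, smul_mul_assoc, ← hb, mul_assoc]
        rw [expand]
        rw [inr_sub ℂ, inr_add ℂ, inr_smul, inr_smul, inr_mul ℂ b (z * c), hz, ← hbU]
        have hsb : s • bU = 1 - e := by rw [he, sub_sub_cancel]
        rw [mul_sub, mul_one, smul_sub, hsb, ← smul_mul_assoc, hsb, pow_succ']
        noncomm_ring
  -- choose the order large enough
  obtain ⟨m, hm⟩ := exists_nat_gt (M / (2 * ε ^ 2))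
  have hmpos : 0 < (m:ℝ) := lt_of_le_of_lt (by positivity) hm
  obtain ⟨z, hzS, hz⟩ := key m
  refine ⟨z, hzS, ?_⟩
  -- compute the norm in the unitization
  have hinr : ((c - c * z * c : A) : A⁺¹) = ((c : A⁺¹)) * e ^ m := by
    rw [inr_sub ℂ, mul_assoc, inr_mul ℂ c (z * c), hz]
    noncomm_ring
  have hnorm : ‖c - c * z * c‖ = ‖((c : A⁺¹)) * e ^ m‖ := by
    rw [← norm_inr (𝕜 := ℂ) (c - c * z * c), hinr]
  have he_sa : IsSelfAdjoint e := by
    rw [he]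
    exact (IsSelfAdjoint.one (R := A⁺¹)).sub (IsSelfAdjoint.smul (star_trivial s) hbU_sa)
  -- C*-identity
  have hsq : ‖((c : A⁺¹)) * e ^ m‖ ^ 2 = ‖e ^ m * bU * e ^ m‖ := by
    rw [sq, ← CStarRing.norm_star_mul_self]
    congr 1
    rw [star_mul, (he_sa.pow m).star_eq, ← mul_assoc, mul_assoc (e ^ m), hbU_eq]
  -- identify with a continuous functional calculus element
  have hcfc : e ^ m * bU * e ^ m
      = cfc (fun t : ℝ => (1 - s * t) ^ m * t * (1 - s * t) ^ m) bU := by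
    have h1 : cfc (fun t : ℝ => 1 - s * t) bU = e := by
      rw [cfc_sub (fun _ : ℝ => (1:ℝ)) (fun t : ℝ => s * t) bU, cfc_const_mul_id s bU,
        cfc_const_one ℝ bU, he]
    rw [cfc_mul (fun t : ℝ => (1 - s * t) ^ m * t) (fun t : ℝ => (1 - s * t) ^ m) bU
        (by fun_prop) (by fun_prop),
      cfc_mul (fun t : ℝ => (1 - s * t) ^ m) (fun t : ℝ => t) bU (by fun_prop) (by fun_prop),
      cfc_pow (fun t : ℝ => 1 - s * t) m bU (by fun_prop), cfc_id' ℝ bU, h1]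
  -- spectral estimate
  have hspec : ∀ t ∈ spectrum ℝ bU, ‖(1 - s * t) ^ m * t * (1 - s * t) ^ m‖ ≤ M / (2 * m) := by
    intro t ht
    have ht0 : 0 ≤ t := by
      have hsms := spectrum_star_mul_self_nonneg (b := ((c : A⁺¹)))
      rw [hbU_eq] at hsms
      exact hsms t ht
    have htM : t ≤ ‖b‖ := by
      have := spectrum.norm_le_norm_of_mem ht
      rw [norm_inr (𝕜 := ℂ)] at this
      simpa [abs_of_nonneg ht0] using this
    have htM' : t < M := lt_of_le_of_lt htM (by rw [hM]; linarith)
    have hu0 : 0 ≤ s * t := by positivity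
    have hu1 : s * t < 1 := by
      rw [hs]
      calc M⁻¹ * t < M⁻¹ * M := by
            exact mul_lt_mul_of_pos_left htM' (by positivity)
        _ = 1 := inv_mul_cancel₀ hM0.ne'
    have h1u : 0 ≤ 1 - s * t := by linarith
    have hgt : (1 - s * t) ^ m * t * (1 - s * t) ^ m = t * (1 - s * t) ^ (2 * m) := by
      rw [two_mul, pow_add]; ring
    rw [hgt, Real.norm_eq_abs, abs_of_nonneg (mul_nonneg ht0 (pow_nonneg h1u _))]
    rcases eq_or_lt_of_le ht0 with h0 | htpos
    · rw [← h0, zero_mul]; positivity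
    · -- Bernoulli's inequality
      have hber : 1 + (2 * m : ℕ) * (s * t) ≤ (1 + s * t) ^ (2 * m : ℕ) :=
        one_add_mul_le_pow (by linarith) (2 * m)
      have hpos2 : (0:ℝ) < 1 + 2 * m * (s * t) := by positivity
      have hkey : (1 - s * t) ^ (2 * m) ≤ 1 / (1 + 2 * m * (s * t)) := by
        rw [le_div_iff₀ hpos2]
        calc (1 - s * t) ^ (2 * m) * (1 + 2 * m * (s * t))
            ≤ (1 - s * t) ^ (2 * m) * (1 + s * t) ^ (2 * m) := by
              apply mul_le_mul_of_nonneg_left _ (by positivity)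
              calc (1:ℝ) + 2 * m * (s * t) = 1 + (2 * m : ℕ) * (s * t) := by push_cast; ring
                _ ≤ (1 + s * t) ^ (2 * m : ℕ) := hber
          _ = ((1 - s * t) * (1 + s * t)) ^ (2 * m) := (mul_pow _ _ _).symm
          _ = (1 - (s * t) ^ 2) ^ (2 * m) := by ring_nf
          _ ≤ 1 ^ (2 * m) := by
              apply pow_le_pow_left₀ _ (by nlinarith)
              nlinarith
          _ = 1 := one_pow _
      calc t * (1 - s * t) ^ (2 * m) ≤ t * (1 / (1 + 2 * m * (s * t))) :=
            mul_le_mul_of_nonneg_left hkey ht0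
        _ ≤ M / (2 * m) := by
            rw [mul_one_div, div_le_div_iff₀ hpos2 (by positivity)]
            have hMst : M * (s * t) = t := by
              rw [hs, ← mul_assoc, mul_inv_cancel₀ hM0.ne', one_mul]
            nlinarith [hM0, htpos, hmpos]
  -- put everything together
  have hle : ‖c - c * z * c‖ ^ 2 ≤ M / (2 * m) := by
    rw [hnorm, hsq, hcfc]
    exact norm_cfc_le (by positivity) hspec
  have hlt : M / (2 * m) < ε ^ 2 := by
    rw [div_lt_iff₀ (by positivity)]
    rw [div_lt_iff₀ (by positivity)] at hm
    nlinarith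
  have := lt_of_le_of_lt hle hlt
  exact lt_of_pow_lt_pow_left₀ 2 hε.le this

end Core


section Main

open Filter Topology

variable (α : A →⋆ₙₐ[ℂ] A)

lemma iter_add (n : ℕ) (x y : A) :
    (⇑α)^[n] (x + y) = (⇑α)^[n] x + (⇑α)^[n] y := by
  rw [← npow_coe]; exact map_add _ _ _

lemma iter_sub (n : ℕ) (x y : A) :
    (⇑α)^[n] (x - y) = (⇑α)^[n] x - (⇑α)^[n] y := by
  rw [← npow_coe]; exact map_sub _ _ _

/-- kernel-complementedness statement at level `n`. -/
def Ker (n : ℕ) : Prop :=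
  ∀ a : A, ∃ k c : A, (⇑α)^[n] k = 0 ∧ IsAnn α n c ∧ a = k + c

/-- hereditary-range statement at level `n`. -/
def Her (n : ℕ) : Prop :=
  ∀ u ∈ Set.range ((⇑α)^[n]), ∀ u' ∈ Set.range ((⇑α)^[n]), ∀ x : A,
    u * x * u' ∈ Set.range ((⇑α)^[n])

/-- The range of `α` as a non-unital star subalgebra. -/
def rangeSub : NonUnitalStarSubalgebra ℂ A where
  carrier := Set.range ⇑α
  add_mem' := by rintro x y ⟨a, rfl⟩ ⟨b, rfl⟩; exact ⟨a + b, map_add α a b⟩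
  zero_mem' := ⟨0, map_zero α⟩
  mul_mem' := by rintro x y ⟨a, rfl⟩ ⟨b, rfl⟩; exact ⟨a * b, map_mul α a b⟩
  smul_mem' := by rintro z x ⟨a, rfl⟩; exact ⟨z • a, map_smul α z a⟩
  star_mem' := by rintro x ⟨a, rfl⟩; exact ⟨star a, map_star α a⟩

lemma mem_rangeSub {x : A} : x ∈ rangeSub α ↔ x ∈ Set.range ⇑α := Iff.rfl

lemma tendsto_of_bound (u : ℕ → A) (t : A) (C : ℝ)
    (h : ∀ m : ℕ, ‖t - u m‖ ≤ C / (m + 1)) :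
    Tendsto u atTop (𝓝 t) := by
  rw [← tendsto_sub_nhds_zero_iff, tendsto_zero_iff_norm_tendsto_zero]
  have hC : Tendsto (fun m : ℕ => C / (m + 1)) atTop (𝓝 0) := by
    have h0 := (tendsto_one_div_add_atTop_nhds_zero_nat).const_mul C
    rw [mul_zero] at h0
    have : (fun m : ℕ => C / (m + 1)) = fun m : ℕ => C * (1 / (m + 1)) := by
      funext m; rw [mul_one_div]
    rw [this]
    exact h0
  exact squeeze_zero (fun m => norm_nonneg _)
    (fun m => by rw [norm_sub_rev]; exact h m) hC

/-- A limit of elements of the range of `α^[n]` is in the range, provided the kernel of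
`α^[n]` is complemented. -/
lemma mem_range_of_tendsto (n : ℕ) (hnk : Ker α n) {t : A} (u : ℕ → A)
    (hu : ∀ m, u m ∈ Set.range ((⇑α)^[n])) (htend : Tendsto u atTop (𝓝 t)) :
    t ∈ Set.range ((⇑α)^[n]) := by
  -- pull back to the annihilator
  have : ∀ m, ∃ c : A, IsAnn α n c ∧ (⇑α)^[n] c = u m := by
    intro m
    obtain ⟨x, hx⟩ := hu m
    obtain ⟨k, c, hk, hc, hx'⟩ := hnk x
    exact ⟨c, hc, by rw [← hx, hx', iter_add, hk, zero_add]⟩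
  choose c hcann hc using this
  -- the pulled-back sequence is Cauchy
  have hdist : ∀ m l, dist (c m) (c l) = dist (u m) (u l) := by
    intro m l
    rw [dist_eq_norm, dist_eq_norm, ← hc m, ← hc l, ← iter_sub]
    exact (norm_iter_of_ann α n (sub_mem (mem_Bsub.mpr (hcann m)) (mem_Bsub.mpr (hcann l)))).symm
  have hcauchy : CauchySeq c := by
    have hucauchy : CauchySeq u := htend.cauchySeq
    rw [Metric.cauchySeq_iff] at hucauchy ⊢
    intro ε hε
    obtain ⟨N, hN⟩ := hucauchy ε hε
    exact ⟨N, fun m hm l hl => by rw [hdist]; exact hN m hm l hl⟩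
  obtain ⟨y, hy⟩ := cauchySeq_tendsto_of_complete hcauchy
  have hyann : IsAnn α n y := by
    have := (isClosed_Bsub α n).mem_of_tendsto hy (Filter.Eventually.of_forall
      (fun m => mem_Bsub.mpr (hcann m)))
    exact mem_Bsub.mp this
  refine ⟨y, ?_⟩
  -- `α^[n] y = t` by continuity on the annihilator
  have htend2 : Tendsto (fun m => (⇑α)^[n] (c m)) atTop (𝓝 ((⇑α)^[n] y)) := by
    rw [← tendsto_sub_nhds_zero_iff, tendsto_zero_iff_norm_tendsto_zero]
    have heq : ∀ m, ‖(⇑α)^[n] (c m) - (⇑α)^[n] y‖ = ‖c m - y‖ := by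
      intro m
      rw [← iter_sub]
      exact norm_iter_of_ann α n (sub_mem (mem_Bsub.mpr (hcann m)) (mem_Bsub.mpr hyann))
    simp only [heq]
    rw [← tendsto_zero_iff_norm_tendsto_zero, tendsto_sub_nhds_zero_iff]
    exact hy
  have htend3 : Tendsto (fun m => (⇑α)^[n] (c m)) atTop (𝓝 t) := by
    simpa only [hc] using htend
  exact tendsto_nhds_unique htend2 htend3

/-- Induction step for complemented kernels. -/
lemma ker_step (n : ℕ) (h1k : Ker α 1) (hnk : Ker α n) (hnh : Her α n) :
    Ker α (n + 1) := by
  intro a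
  set r : A := (⇑α)^[n] a with hr
  obtain ⟨k₁, c₁, hk₁, hc₁, hrsum⟩ := h1k r
  -- approximate `c₁` by elements of the range of `α^[n]`
  have hc₁mem : c₁ ∈ Set.range ((⇑α)^[n]) := by
    have happrox : ∀ m : ℕ, ∃ w : A, w ∈ Set.range ((⇑α)^[n]) ∧ ‖c₁ - w‖ ≤ 1 / (m + 1) := by
      intro m
      obtain ⟨z, hzS, hz⟩ := core (Bsub α 1) (mem_Bsub.mpr hc₁)
        (by positivity : (0:ℝ) < 1 / (m + 1))
      refine ⟨r * z * r, hnh r ⟨a, hr.symm⟩ r ⟨a, hr.symm⟩ z, ?_⟩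
      have hzk : z * k₁ = 0 := (mem_Bsub.mp hzS) k₁ (by simpa using hk₁)
      have hkz : k₁ * z = 0 := ker_mul_ann α 1 (mem_Bsub.mp hzS) (by simpa using hk₁)
      have e1 : r * z = c₁ * z := by rw [hrsum, add_mul, hkz, zero_add]
      have : r * z * r = c₁ * z * c₁ := by
        rw [e1, hrsum, mul_add, mul_assoc, hzk, mul_zero, zero_add]
      rw [this]
      exact hz.le
    choose w hwmem hwbound using happrox
    exact mem_range_of_tendsto α n hnk w hwmem (tendsto_of_bound w c₁ 1 hwbound)
  obtain ⟨y, hy⟩ := hc₁mem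
  obtain ⟨ky, cy, hky, hcy, hysum⟩ := hnk y
  have hcy_img : (⇑α)^[n] cy = c₁ := by
    rw [← hy, hysum, iter_add, hky, zero_add]
  refine ⟨a - cy, cy, ?_, ?_, (sub_add_cancel a cy).symm⟩
  · -- `α^[n+1] (a - cy) = 0`
    rw [Function.iterate_succ_apply', iter_sub, hcy_img, ← hr, hrsum, add_sub_cancel_right,
      ← Function.iterate_one ⇑α, hk₁]
  · -- `cy` annihilates the kernel of `α^[n+1]`
    intro b hb
    obtain ⟨kb, cb, hkb, hcb, hbsum⟩ := hnk b
    have h1 : cy * kb = 0 := hcy kb hkb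
    have h2 : cy * cb = 0 := by
      apply ann_inj α n (mem_Bsub.mp (mul_mem (mem_Bsub.mpr hcy) (mem_Bsub.mpr hcb)))
      rw [iter_mul, hcy_img]
      have hcb_img : (⇑α)^[n] cb = (⇑α)^[n] b := by
        rw [hbsum, iter_add, hkb, zero_add]
      rw [hcb_img]
      refine hc₁ ((⇑α)^[n] b) ?_
      rw [Function.iterate_one]
      rw [Function.iterate_succ_apply'] at hb
      exact hb
    rw [hbsum, mul_add, h1, h2, add_zero]

/-- Induction step for hereditary ranges. -/
lemma her_step (n : ℕ)
    (h1h : ∀ u ∈ Set.range ⇑α, ∀ u' ∈ Set.range ⇑α, ∀ x : A, u * x * u' ∈ Set.range ⇑α)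
    (hnh : Her α n) (hk : Ker α (n + 1)) :
    Her α (n + 1) := by
  have her_aux : ∀ u ∈ Set.range ((⇑α)^[n + 1]), ∀ u' ∈ Set.range ((⇑α)^[n + 1]),
      ∀ d ∈ Set.range ⇑α, u * d * u' ∈ Set.range ((⇑α)^[n + 1]) := by
    rintro _ ⟨p, rfl⟩ _ ⟨p', rfl⟩ _ ⟨y, rfl⟩
    obtain ⟨q, hq⟩ := hnh ((⇑α)^[n] p) ⟨p, rfl⟩ ((⇑α)^[n] p') ⟨p', rfl⟩ y
    refine ⟨q, ?_⟩
    rw [Function.iterate_succ_apply' ⇑α n p, Function.iterate_succ_apply' ⇑α n p',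
      Function.iterate_succ_apply' ⇑α n q, hq, map_mul, map_mul]
  intro u hu u' hu' x
  have huα : u ∈ Set.range ⇑α := by
    obtain ⟨p, rfl⟩ := hu
    exact ⟨(⇑α)^[n] p, (Function.iterate_succ_apply' ⇑α n p).symm⟩
  have hu'α : u' ∈ Set.range ⇑α := by
    obtain ⟨p, rfl⟩ := hu'
    exact ⟨(⇑α)^[n] p, (Function.iterate_succ_apply' ⇑α n p).symm⟩
  set C : ℝ := ‖x‖ * ‖u'‖ + (‖u‖ + 1) * ‖x‖ with hC
  have happrox : ∀ m : ℕ, ∃ t : A, t ∈ Set.range ((⇑α)^[n + 1]) ∧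
      ‖u * x * u' - t‖ ≤ C / (m + 1) := by
    intro m
    have hεm : (0:ℝ) < 1 / (m + 1) := by positivity
    have hεm1 : (1:ℝ) / (m + 1) ≤ 1 := by
      rw [div_le_one (by positivity)]
      simp
    obtain ⟨z, hzS, hzb⟩ := core (rangeSub α) ((mem_rangeSub α).mpr huα) hεm
    obtain ⟨z', hz'S, hz'b⟩ := core (rangeSub α) ((mem_rangeSub α).mpr hu'α) hεm
    set y : A := z * u with hy
    set y' : A := u' * z' with hy'
    have hymem : y ∈ Set.range ⇑α :=
      (mem_rangeSub α).mp (mul_mem hzS ((mem_rangeSub α).mpr huα))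
    have hy'mem : y' ∈ Set.range ⇑α :=
      (mem_rangeSub α).mp (mul_mem ((mem_rangeSub α).mpr hu'α) hz'S)
    have hmid : y * x * y' ∈ Set.range ⇑α := h1h y hymem y' hy'mem x
    refine ⟨u * (y * x * y') * u', her_aux u hu u' hu' _ hmid, ?_⟩
    have h1 : ‖u - u * y‖ ≤ 1 / (m + 1) := by
      rw [hy, ← mul_assoc]
      exact hzb.le
    have h2 : ‖u' - y' * u'‖ ≤ 1 / (m + 1) := by
      rw [hy']
      exact hz'b.le
    have h3 : ‖u * y‖ ≤ ‖u‖ + 1 := by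
      calc ‖u * y‖ = ‖u - (u - u * y)‖ := by rw [sub_sub_cancel]
        _ ≤ ‖u‖ + ‖u - u * y‖ := norm_sub_le _ _
        _ ≤ ‖u‖ + 1 := by linarith
    have hsplit : u * x * u' - u * (y * x * y') * u'
        = (u - u * y) * x * u' + (u * y) * x * (u' - y' * u') := by
      noncomm_ring
    calc ‖u * x * u' - u * (y * x * y') * u'‖
        = ‖(u - u * y) * x * u' + (u * y) * x * (u' - y' * u')‖ := by rw [hsplit]
      _ ≤ ‖(u - u * y) * x * u'‖ + ‖(u * y) * x * (u' - y' * u')‖ := norm_add_le _ _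
      _ ≤ ‖u - u * y‖ * ‖x‖ * ‖u'‖ + ‖u * y‖ * ‖x‖ * ‖u' - y' * u'‖ := by
          gcongr <;> first
            | exact (norm_mul_le _ _).trans (by gcongr; exact norm_mul_le _ _)
            | skip
      _ ≤ (1 / (m + 1)) * ‖x‖ * ‖u'‖ + (‖u‖ + 1) * ‖x‖ * (1 / (m + 1)) := by
          gcongr
      _ = C / (m + 1) := by rw [hC]; ring
  choose t htmem htb using happrox
  exact mem_range_of_tendsto α (n + 1) hk t htmem
    (tendsto_of_bound t (u * x * u') C htb)

/-- The main induction. -/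
theorem main (h1k : Ker α 1)
    (h1h : ∀ u ∈ Set.range ⇑α, ∀ u' ∈ Set.range ⇑α, ∀ x : A, u * x * u' ∈ Set.range ⇑α) :
    ∀ n : ℕ, Ker α n ∧ Her α n := by
  intro n
  induction n with
  | zero =>
    constructor
    · intro a
      refine ⟨0, a, rfl, fun b hb => ?_, (zero_add a).symm⟩
      have : b = 0 := hb
      rw [this, mul_zero]
    · intro u _ u' _ x
      exact ⟨u * x * u', rfl⟩
  | succ n ih =>
    obtain ⟨hnk, hnh⟩ := ih
    have hk := ker_step α n h1k hnk hnh
    exact ⟨hk, her_step α n h1h hnh hk⟩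

end Main

end Stmt4Aux

/-- If `(A, α)` is a reversible C*-dynamical system (complemented kernel,
hereditary range), then for every `n ∈ ℕ` the system `(A, αⁿ)` is reversible as well. -/
theorem stmt4 {A : Type*} [NonUnitalNormedRing A] [StarRing A] [CStarRing A]
    [NormedSpace ℂ A] [IsScalarTower ℂ A A] [SMulCommClass ℂ A A] [StarModule ℂ A]
    [CompleteSpace A]
    (α : A →⋆ₙₐ[ℂ] A)
    -- `ker α` is complemented: `ker α + (ker α)^⊥ = A`
    (hker : ∀ a : A, ∃ k c : A, α k = 0 ∧ (∀ b : A, α b = 0 → c * b = 0) ∧ a = k + c)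
    -- `α(A)` is a hereditary C*-subalgebra of `A`
    (hher : ∀ u ∈ Set.range ⇑α, ∀ u' ∈ Set.range ⇑α, ∀ x : A, u * x * u' ∈ Set.range ⇑α) :
    ∀ n : ℕ,
      -- `ker (αⁿ)` is complemented: `ker (αⁿ) + (ker (αⁿ))^⊥ = A`
      (∀ a : A, ∃ k c : A, (⇑α)^[n] k = 0 ∧
        (∀ b : A, (⇑α)^[n] b = 0 → c * b = 0) ∧ a = k + c) ∧
      -- `αⁿ(A)` is a hereditary C*-subalgebra of `A`
      (∀ u ∈ Set.range ((⇑α)^[n]), ∀ u' ∈ Set.range ((⇑α)^[n]), ∀ x : A,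
        u * x * u' ∈ Set.range ((⇑α)^[n])) := by
  letI : NonUnitalCStarAlgebra A := { }
  intro n
  have h1k : Stmt4Aux.Ker α 1 := by
    intro a
    obtain ⟨k, c, h1, h2, h3⟩ := hker a
    exact ⟨k, c, by simpa using h1, fun b hb => h2 b (by simpa using hb), h3⟩
  obtain ⟨hk, hh⟩ := Stmt4Aux.main α h1k hher n
  exact ⟨fun a => hk a, hh⟩
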